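/- Let x : [t₀, ∞) → ℝ^n be C¹ with ‖ẋ(t)‖ ≤ C/t for all t ≥ t₀ (with C > 0, t₀ > 0), and let Φ : ℝ^n → [0, ∞) be continuous with ∫_{t₀}^∞ t·Φ(x(t)) dt < ∞. If x has bounded range (so Φ is uniformly continuous on the closure K of the trajectory), then Φ(x(t)) → 0 as t → ∞. -/

import Mathlib

open Filter Topology MeasureTheory

theorem stmt_7 {n : ℕ} (t₀ C : ℝ) (ht₀ : 0 < t₀) (hC : 0 < C)
    (x x' : ℝ → EuclideanSpace ℝ (Fin n))
    (Φ : EuclideanSpace ℝ (Fin n) → ℝ)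
    (hx : ∀ t ∈ Set.Ici t₀, HasDerivAt x (x' t) t)
    (hspeed : ∀ t ∈ Set.Ici t₀, ‖x' t‖ ≤ C / t)
    (hΦc : Continuous Φ)
    (hΦnn : ∀ y, 0 ≤ Φ y)
    (hint : IntegrableOn (fun t => t * Φ (x t)) (Set.Ici t₀))
    (hbdd : ∃ M, ∀ t ∈ Set.Ici t₀, ‖x t‖ ≤ M) :
    Tendsto (fun t => Φ (x t)) atTop (nhds 0) := by
  obtain ⟨M, hM⟩ := hbdd
  by_contra hcon
  rw [Metric.tendsto_atTop] at hcon
  push_neg at hcon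
  obtain ⟨ε, hε, hfreq⟩ := hcon
  -- uniform continuity of Φ on a compact ball containing the trajectory
  have hK : IsCompact (Metric.closedBall (0 : EuclideanSpace ℝ (Fin n)) M) :=
    isCompact_closedBall _ _
  have huc := hK.uniformContinuousOn_of_continuous hΦc.continuousOn
  rw [Metric.uniformContinuousOn_iff] at huc
  obtain ⟨δ, hδ, hucδ⟩ := huc (ε / 2) (by linarith)
  set ρ := δ / (2 * C) with hρdef
  have hρ : 0 < ρ := by positivity
  set I := ∫ t in Set.Ici t₀, t * Φ (x t) with hIdef
  obtain ⟨t₁, ht₁N, ht₁ε⟩ := hfreq (max t₀ (max 1 (2 * I / (ε * ρ) + 1)))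
  have ht₁0 : t₀ ≤ t₁ := le_trans (le_max_left _ _) ht₁N
  have ht₁1 : (1 : ℝ) ≤ t₁ :=
    le_trans (le_trans (le_max_left _ _) (le_max_right _ _)) ht₁N
  have ht₁I : 2 * I / (ε * ρ) + 1 ≤ t₁ :=
    le_trans (le_trans (le_max_right _ _) (le_max_right _ _)) ht₁N
  have ht₁pos : 0 < t₁ := lt_of_lt_of_le ht₀ ht₁0
  have hεΦ : ε ≤ Φ (x t₁) := by
    rwa [Real.dist_eq, sub_zero, abs_of_nonneg (hΦnn _)] at ht₁ε
  have hxK : ∀ t, t₀ ≤ t → x t ∈ Metric.closedBall (0 : EuclideanSpace ℝ (Fin n)) M :=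
    fun t ht => mem_closedBall_zero_iff.mpr (hM t ht)
  have hsub : Set.Icc t₁ ((1 + ρ) * t₁) ⊆ Set.Ici t₀ := fun s hs => le_trans ht₁0 hs.1
  -- key estimate: the trajectory moves less than δ on [t₁, (1+ρ)t₁]
  have hest : ∀ s ∈ Set.Icc t₁ ((1 + ρ) * t₁), dist (x s) (x t₁) < δ := by
    intro s hs
    have hderiv : ∀ u ∈ Set.Icc t₁ ((1 + ρ) * t₁),
        HasDerivWithinAt x (x' u) (Set.Icc t₁ ((1 + ρ) * t₁)) u :=
      fun u hu => (hx u (hsub hu)).hasDerivWithinAt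
    have hbound : ∀ u ∈ Set.Icc t₁ ((1 + ρ) * t₁), ‖x' u‖ ≤ C / t₁ := by
      intro u hu
      refine le_trans (hspeed u (hsub hu)) ?_
      have hu1 : t₁ ≤ u := hu.1
      gcongr
    have hmem : t₁ ∈ Set.Icc t₁ ((1 + ρ) * t₁) :=
      Set.left_mem_Icc.mpr (by nlinarith)
    have hkey := (convex_Icc t₁ ((1 + ρ) * t₁)).norm_image_sub_le_of_norm_hasDerivWithin_le
      hderiv hbound hmem hs
    have hnorm : ‖s - t₁‖ ≤ ρ * t₁ := by
      rw [Real.norm_eq_abs, abs_of_nonneg (by linarith [hs.1])]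
      nlinarith [hs.2]
    have hCd : (C / t₁) * (ρ * t₁) = δ / 2 := by
      field_simp [hρdef]
      rw [hρdef]; field_simp
    have : dist (x s) (x t₁) ≤ (C / t₁) * ‖s - t₁‖ := by
      rw [dist_eq_norm]; exact hkey
    have h2 : (C / t₁) * ‖s - t₁‖ ≤ δ / 2 := by
      rw [← hCd]
      exact mul_le_mul_of_nonneg_left hnorm (by positivity)
    linarith
  -- Φ stays ≥ ε/2 on the interval
  have hΦhalf : ∀ s ∈ Set.Icc t₁ ((1 + ρ) * t₁), ε / 2 ≤ Φ (x s) := by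
    intro s hs
    have hd := hucδ (x s) (hxK s (hsub hs)) (x t₁) (hxK t₁ ht₁0) (hest s hs)
    rw [Real.dist_eq] at hd
    have := abs_sub_lt_iff.mp hd
    linarith [this.2]
  -- integral lower bound on the interval
  have hIcc_int : IntegrableOn (fun t => t * Φ (x t)) (Set.Icc t₁ ((1 + ρ) * t₁)) :=
    hint.mono_set hsub
  have hne : volume (Set.Icc t₁ ((1 + ρ) * t₁)) ≠ ⊤ := by
    simp [Real.volume_Icc]
  have hlow : (t₁ * (ε / 2)) * (volume (Set.Icc t₁ ((1 + ρ) * t₁))).toReal ≤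
      ∫ t in Set.Icc t₁ ((1 + ρ) * t₁), t * Φ (x t) := by
    refine setIntegral_ge_of_const_le_real measurableSet_Icc hne (fun s hs => ?_) hIcc_int
    have h1 := hΦhalf s hs
    have h2 : t₁ ≤ s := hs.1
    nlinarith [hΦnn (x s)]
  have hmono : ∫ t in Set.Icc t₁ ((1 + ρ) * t₁), t * Φ (x t) ≤ I := by
    refine setIntegral_mono_set hint ?_ (HasSubset.Subset.eventuallyLE hsub)
    filter_upwards [ae_restrict_mem measurableSet_Ici] with t ht
    have : 0 < t := lt_of_lt_of_le ht₀ ht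
    exact mul_nonneg this.le (hΦnn _)
  have hvol : (volume (Set.Icc t₁ ((1 + ρ) * t₁))).toReal = ρ * t₁ := by
    rw [Real.volume_Icc, ENNReal.toReal_ofReal (by nlinarith)]
    ring
  rw [hvol] at hlow
  have hIpos : (t₁ * (ε / 2)) * (ρ * t₁) ≤ I := le_trans hlow hmono
  have hερ : 0 < ε * ρ := mul_pos hε hρ
  have h2 : 2 * I / (ε * ρ) < t₁ := by linarith
  have h3 : 2 * I < t₁ * (ε * ρ) := by
    rw [div_lt_iff₀ hερ] at h2; linarith
  have h4 : ε * ρ * t₁ * 1 ≤ ε * ρ * t₁ * t₁ :=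
    mul_le_mul_of_nonneg_left ht₁1 (mul_pos hερ ht₁pos).le
  nlinarith [hIpos, h3, h4]
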